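/- Let $n \ge 2$, $p \ge 1$, let $c$ be a real number, and let $h^{\alpha}$ ($\alpha = 1, \dots, p$) be symmetric $n \times n$ real matrices. Set $S = \sum_{\alpha=1}^{p} \sum_{i,j=1}^{n} (h^{\alpha}_{ij})^2$ and $T_{\alpha} = \sum_{i=1}^{n} h^{\alpha}_{ii}$. Then $c + \sum_{\alpha=1}^{p} \big[ h^{\alpha}_{11} h^{\alpha}_{22} - (h^{\alpha}_{12})^2 \big] \ \ge\ \frac{1}{2} \Big( 2c + \frac{\sum_{\alpha} T_{\alpha}^2}{n-1} - S \Big) + \sum_{\alpha=1}^{p} \sum_{1 \le i < j \le n,\ (i,j) \ne (1,2)} (h^{\alpha}_{ij})^2$. -/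

import Mathlib

private lemma cauchy_step' (n : ℕ) (hn : 2 ≤ n) (d : Fin n → ℝ) :
    (∑ i, d i) ^ 2 ≤ ((n : ℝ) - 1) *
      (∑ i, (d i) ^ 2 + 2 * d ⟨0, by omega⟩ * d ⟨1, by omega⟩) := by
  set e0 : Fin n := ⟨0, by omega⟩
  set e1 : Fin n := ⟨1, by omega⟩
  have hne : e1 ≠ e0 := by simp [e0, e1, Fin.ext_iff]
  set y : Fin n → ℝ := fun i => if i = e0 then d e0 + d e1 else d i with hy
  set s : Finset (Fin n) := Finset.univ.erase e1
  have hcard : (s.card : ℝ) = (n : ℝ) - 1 := by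
    have : s.card = n - 1 := by
      simp [s, Finset.card_erase_of_mem]
    rw [this]
    push_cast [Nat.cast_sub (by omega : 1 ≤ n)]
    ring
  have herase : ∀ f : Fin n → ℝ, ∑ i ∈ Finset.univ.erase e0, f i = (∑ i, f i) - f e0 := by
    intro f
    rw [eq_sub_iff_add_eq, Finset.sum_erase_add _ _ (Finset.mem_univ e0)]
  have hyuniv : ∀ k : ℕ, ∑ i, (y i) ^ k = (∑ i, (d i) ^ k) + (d e0 + d e1) ^ k - (d e0) ^ k := by
    intro k
    have h0 : ∑ i, (y i)^k = (y e0)^k + ∑ i ∈ Finset.univ.erase e0, (y i)^k :=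
      (Finset.add_sum_erase _ (fun i => (y i)^k) (Finset.mem_univ e0)).symm
    have h0' : ∑ i ∈ Finset.univ.erase e0, (y i)^k = ∑ i ∈ Finset.univ.erase e0, (d i)^k := by
      refine Finset.sum_congr rfl ?_
      intro i hi
      have : i ≠ e0 := Finset.ne_of_mem_erase hi
      simp [y, this]
    have hy0 : y e0 = d e0 + d e1 := by simp [y]
    rw [h0, h0', hy0, herase (fun i => (d i)^k)]
    ring
  have hsum : ∑ i ∈ s, y i = ∑ i, d i := by
    have h1 : ∑ i ∈ s, y i = (∑ i, y i) - y e1 := by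
      rw [eq_sub_iff_add_eq, Finset.sum_erase_add _ _ (Finset.mem_univ e1)]
    have h2 := hyuniv 1
    simp only [pow_one] at h2
    have h3 : y e1 = d e1 := by simp [y, hne]
    rw [h1, h2, h3]; ring
  have hsumsq : ∑ i ∈ s, (y i) ^ 2
      = ∑ i, (d i) ^ 2 + 2 * d e0 * d e1 := by
    have h1 : ∑ i ∈ s, (y i)^2 = (∑ i, (y i)^2) - (y e1)^2 := by
      rw [eq_sub_iff_add_eq, Finset.sum_erase_add _ _ (Finset.mem_univ e1)]
    have h2 := hyuniv 2
    have h3 : y e1 = d e1 := by simp [y, hne]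
    rw [h1, h2, h3]; ring
  calc (∑ i, d i)^2 = (∑ i ∈ s, y i)^2 := by rw [hsum]
    _ ≤ (s.card : ℝ) * ∑ i ∈ s, (y i)^2 := sq_sum_le_card_mul_sum_sq
    _ = _ := by rw [hcard, hsumsq]

private lemma sym_decomp' (n : ℕ) (g : Fin n → Fin n → ℝ) (hsymm : ∀ i j, g i j = g j i) :
    ∑ i, ∑ j, (g i j)^2
      = ∑ i, (g i i)^2 + 2 * ∑ i, ∑ j, (if i < j then (g i j)^2 else 0) := by
  have key : ∀ i j : Fin n, (g i j)^2 = (if i < j then (g i j)^2 else 0)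
      + (if i = j then (g i j)^2 else 0) + (if j < i then (g i j)^2 else 0) := by
    intro i j
    rcases lt_trichotomy i j with hl | he | hg
    · simp [hl, hl.ne, not_lt.mpr hl.le]
    · simp [he]
    · simp [hg, hg.ne', not_lt.mpr hg.le]
  calc ∑ i, ∑ j, (g i j)^2
      = ∑ i, ∑ j, ((if i < j then (g i j)^2 else 0)
        + (if i = j then (g i j)^2 else 0) + (if j < i then (g i j)^2 else 0)) := by
        simp_rw [← key]
    _ = (∑ i, ∑ j, if i < j then (g i j)^2 else 0)
        + (∑ i, ∑ j, if i = j then (g i j)^2 else 0)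
        + (∑ i, ∑ j, if j < i then (g i j)^2 else 0) := by
        simp [Finset.sum_add_distrib]
    _ = _ := by
        have h2 : (∑ i, ∑ j, if i = j then (g i j)^2 else 0) = ∑ i, (g i i)^2 := by
          simp
        have h3 : (∑ i : Fin n, ∑ j, if j < i then (g i j)^2 else 0)
            = ∑ i, ∑ j, if i < j then (g i j)^2 else 0 := by
          rw [Finset.sum_comm]
          congr 1; funext i; congr 1; funext j
          by_cases hij : i < j <;> simp [hij, hsymm i j]
        rw [h2, h3]; ring

private lemma f2' (n p : ℕ) (h : Fin p → Fin n → Fin n → ℝ)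
    (hsymm : ∀ α i j, h α i j = h α j i) :
    ∑ α, ∑ i, ∑ j, (h α i j)^2
      = (∑ α, ∑ i, (h α i i)^2)
        + 2 * ∑ α, ∑ i, ∑ j, (if i < j then (h α i j)^2 else 0) := by
  rw [Finset.mul_sum, ← Finset.sum_add_distrib]
  exact Finset.sum_congr rfl fun α _ => sym_decomp' n (h α) (hsymm α)

private lemma f3' (n p : ℕ) (h : Fin p → Fin n → Fin n → ℝ)
    (e0 e1 : Fin n) (h01 : e0 < e1) :
    (∑ α, ∑ i, ∑ j,
      if i < j ∧ ¬(i = e0 ∧ j = e1) then (h α i j) ^ 2 else 0)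
      = (∑ α, ∑ i, ∑ j, (if i < j then (h α i j)^2 else 0))
        - ∑ α, (h α e0 e1)^2 := by
  rw [← Finset.sum_sub_distrib]
  refine Finset.sum_congr rfl ?_
  intro α _
  have key : ∀ i j : Fin n, (if i < j ∧ ¬(i = e0 ∧ j = e1) then (h α i j)^2 else 0)
      = (if i < j then (h α i j)^2 else 0)
        - (if i = e0 ∧ j = e1 then (h α i j)^2 else 0) := by
    intro i j
    by_cases h2 : i = e0 ∧ j = e1
    · obtain ⟨hi, hj⟩ := h2; subst hi; subst hj; simp [h01]
    · by_cases h1 : i < j <;> simp [h1, h2]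
  have inner : (∑ i, ∑ j, if i = e0 ∧ j = e1 then (h α i j)^2 else 0)
      = (h α e0 e1)^2 := by
    have hj : ∀ i : Fin n, (∑ j, if i = e0 ∧ j = e1 then (h α i j)^2 else 0)
        = if i = e0 then (h α i e1)^2 else 0 := by
      intro i
      by_cases hi : i = e0 <;> simp [hi]
    rw [Finset.sum_congr rfl (fun i _ => hj i)]
    simp
  calc ∑ i, ∑ j, (if i < j ∧ ¬(i = e0 ∧ j = e1) then (h α i j)^2 else 0)
      = ∑ i, ∑ j, ((if i < j then (h α i j)^2 else 0)
          - (if i = e0 ∧ j = e1 then (h α i j)^2 else 0)) :=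
        Finset.sum_congr rfl fun i _ => Finset.sum_congr rfl fun j _ => key i j
    _ = (∑ i, ∑ j, if i < j then (h α i j)^2 else 0)
          - ∑ i, ∑ j, (if i = e0 ∧ j = e1 then (h α i j)^2 else 0) := by
        rw [← Finset.sum_sub_distrib]
        exact Finset.sum_congr rfl fun i _ => Finset.sum_sub_distrib _ _
    _ = _ := by rw [inner]

private lemma f4' (n p : ℕ) (hn : 2 ≤ n) (h : Fin p → Fin n → Fin n → ℝ)
    (T : Fin p → ℝ) (hT : ∀ α, T α = ∑ i, h α i i) :
    (∑ α, (T α)^2) / ((n : ℝ) - 1)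
      ≤ (∑ α, ∑ i, (h α i i)^2)
        + 2 * ∑ α, h α ⟨0, by omega⟩ ⟨0, by omega⟩ * h α ⟨1, by omega⟩ ⟨1, by omega⟩ := by
  have hn1 : (0:ℝ) < (n:ℝ) - 1 := by
    have : (2:ℝ) ≤ (n:ℝ) := by exact_mod_cast hn
    linarith
  rw [div_le_iff₀ hn1]
  rw [mul_comm]
  calc ∑ α, (T α)^2
      ≤ ∑ α, ((n:ℝ) - 1) * (∑ i, (h α i i)^2
          + 2 * h α ⟨0, by omega⟩ ⟨0, by omega⟩ * h α ⟨1, by omega⟩ ⟨1, by omega⟩) := by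
        refine Finset.sum_le_sum ?_
        intro α _
        rw [hT]
        exact cauchy_step' n hn (fun i => h α i i)
    _ = _ := by
        rw [← Finset.mul_sum]
        congr 1
        rw [Finset.sum_add_distrib, Finset.mul_sum]
        congr 1
        exact Finset.sum_congr rfl (fun α _ => by ring)

theorem sectional_curvature_lower_bound (n p : ℕ) (hn : 2 ≤ n) (hp : 1 ≤ p)
    (c : ℝ) (h : Fin p → Fin n → Fin n → ℝ)
    (hsymm : ∀ α i j, h α i j = h α j i)
    (S : ℝ) (hS : S = ∑ α, ∑ i, ∑ j, (h α i j) ^ 2)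
    (T : Fin p → ℝ) (hT : ∀ α, T α = ∑ i, h α i i) :
    c + ∑ α, (h α ⟨0, by omega⟩ ⟨0, by omega⟩ * h α ⟨1, by omega⟩ ⟨1, by omega⟩
        - (h α ⟨0, by omega⟩ ⟨1, by omega⟩) ^ 2) ≥
      (1 / 2) * (2 * c + (∑ α, (T α) ^ 2) / (n - 1) - S)
        + ∑ α, ∑ i, ∑ j,
            if i < j ∧ ¬(i = (⟨0, by omega⟩ : Fin n) ∧ j = (⟨1, by omega⟩ : Fin n))
            then (h α i j) ^ 2 else 0 := by
  have h01 : (⟨0, by omega⟩ : Fin n) < ⟨1, by omega⟩ := by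
    simp [Fin.lt_def]
  have f1 : ∑ α, (h α ⟨0, by omega⟩ ⟨0, by omega⟩ * h α ⟨1, by omega⟩ ⟨1, by omega⟩
        - (h α ⟨0, by omega⟩ ⟨1, by omega⟩) ^ 2)
      = (∑ α, h α ⟨0, by omega⟩ ⟨0, by omega⟩ * h α ⟨1, by omega⟩ ⟨1, by omega⟩)
        - ∑ α, (h α ⟨0, by omega⟩ ⟨1, by omega⟩) ^ 2 := Finset.sum_sub_distrib _ _
  have f2 := f2' n p h hsymm
  have f3 := f3' n p h ⟨0, by omega⟩ ⟨1, by omega⟩ h01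
  have f4 := f4' n p hn h T hT
  rw [hS, f1, f2, f3]
  linarith [f4]
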